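/- Functoriality: fix a constant N₀ ∈ ℕ and define, for each unital vector space v, the vertex algebra V(v) := F(v)/I(v) with constant locality function N ≡ N₀. Let φ : v → v′ be a linear map of unital vector spaces with φ(1) = 1, and let Φ : F(v) → F(v′) be the induced map determined by Φ(u) = φ(u) for u ∈ v and Φ(xₙy) = Φ(x)ₙΦ(y). Then Φ(I(v)) ⊆ I(v′), so Φ descends to a vertex algebra morphism V(φ) : V(v) → V(v′) (a linear map sending 1 to 1 and satisfying V(φ)(xₙy) = V(φ)(x)ₙV(φ)(y)); moreover V(id_v) = id_{V(v)} and V(φ ∘ ψ) = V(φ) ∘ V(ψ) for composable morphisms ψ, φ of unital vector spaces. -/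

import Mathlib

noncomputable section

/-!
Common framework: "infinite free algebras" in the sense of Eller, *Chiral vector bundles*.

An infinite free algebra (completed) is modelled as a topological vector space `F`
over a field `k` of characteristic zero, with a distinguished vector `one` and a
`ℤ`-indexed family of bilinear products `circ n`.  The formal infinite sums provided
by the completion are interpreted by `tsum` (`∑'`).  An ideal is a subspace closed
under all the products (on both sides) and under convergent (formal) infinite sums.
-/

/-- An infinite free algebra (completed). -/
structure IFA (k F : Type) [Field k] [CharZero k] [AddCommGroup F] [Module k F]
    [TopologicalSpace F] where
  /-- the distinguished vector `1` -/
  one : F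
  /-- the products `∘ₙ`; `circ n x y` is `x ∘ₙ y` -/
  circ : ℤ → F → F → F
  circ_add_left : ∀ (n : ℤ) (x x' y : F), circ n (x + x') y = circ n x y + circ n x' y
  circ_add_right : ∀ (n : ℤ) (x y y' : F), circ n x (y + y') = circ n x y + circ n x y'
  circ_smul_left : ∀ (n : ℤ) (c : k) (x y : F), circ n (c • x) y = c • circ n x y
  circ_smul_right : ∀ (n : ℤ) (c : k) (x y : F), circ n x (c • y) = c • circ n x y

namespace IFA

/-- The binomial coefficient `C(m, K)` for `m : ℤ`, `K : ℕ`, as an element of `k`. -/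
def zbinom (k : Type) [Field k] [CharZero k] (m : ℤ) (K : ℕ) : k :=
  (∏ i ∈ Finset.range K, ((m : k) - (i : k))) / (K.factorial : k)

variable {k F : Type} [Field k] [CharZero k] [AddCommGroup F] [Module k F]
  [TopologicalSpace F] (A : IFA k F)

/-- `D x := x ∘₋₂ 1`. -/
def D (x : F) : F := A.circ (-2) x A.one

/-- identity generators `i⟦x;n⟧ := 1ₙx − δ_{n,−1}x` -/
def geni (x : F) (n : ℤ) : F := A.circ n A.one x - (if n = -1 then x else 0)

/-- derivation generators `d⟦x,y;n⟧ := D(xₙy) − (Dx)ₙy − xₙ(Dy)` -/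
def gend (x y : F) (n : ℤ) : F :=
  A.D (A.circ n x y) - A.circ n (A.D x) y - A.circ n x (A.D y)

/-- shift generators `e⟦x,y;n⟧ := (Dx)ₙy + n·x_{n−1}y` -/
def gene (x y : F) (n : ℤ) : F := A.circ n (A.D x) y + (n : k) • A.circ (n - 1) x y

/-- quasi-commutativity generators
`qc⟦x,y;n⟧ := xₙy + Σ_{K≥0}((−1)^{n+K}/K!)·D^K(y_{n+K}x)` -/
def genqc (x y : F) (n : ℤ) : F :=
  A.circ n x y +
    ∑' K : ℕ, (((-1 : k) ^ (n + (K : ℤ))) * ((K.factorial : k)⁻¹)) •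
      (A.D)^[K] (A.circ (n + (K : ℤ)) y x)

/-- quasi-associativity generators
`qa⟦x,y,z;m,n⟧ := (x_my)_nz − Σ_{K≥0} C(m,K)(−1)^K (x_{m−K}(y_{n+K}z) − (−1)^m y_{m+n−K}(x_Kz))` -/
def genqa (x y z : F) (m n : ℤ) : F :=
  A.circ n (A.circ m x y) z -
    ∑' K : ℕ, ((zbinom k m K) * ((-1 : k) ^ K)) •
      (A.circ (m - (K : ℤ)) x (A.circ (n + (K : ℤ)) y z)
        - ((-1 : k) ^ m) • A.circ (m + n - (K : ℤ)) y (A.circ (K : ℤ) x z))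

/-- An ideal of the (completed) infinite free algebra: a subspace closed under all the
products `∘ₙ` by arbitrary elements on both sides, and under the formal (convergent)
infinite sums provided by the completion. -/
def IsIdeal (J : Submodule k F) : Prop :=
  (∀ (n : ℤ) (x y : F), y ∈ J → A.circ n x y ∈ J ∧ A.circ n y x ∈ J) ∧
    (∀ f : ℕ → F, (∀ i, f i ∈ J) → Summable f → (∑' i, f i) ∈ J)

/-- The ideal generated by a set `S ⊆ F`. -/
def idealGenBy (S : Set F) : Submodule k F := sInf {J | A.IsIdeal J ∧ S ⊆ J}

/-- The generators of the vertex algebra ideal other than the locality generators: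
`i⟦x;n⟧, d⟦x,y;n⟧, qc⟦x,y;n⟧` for `n = −1` and all `n ≥ 0`; `qa⟦x,y,z;m,n⟧` for
`m, n ∈ {−1,0,1,2,…}`; and `e⟦x,y;n⟧` for all `n ∈ ℤ`. -/
def baseGens : Set F :=
  {w | ∃ (x : F) (n : ℤ), -1 ≤ n ∧ w = A.geni x n} ∪
  {w | ∃ (x y : F) (n : ℤ), -1 ≤ n ∧ w = A.gend x y n} ∪
  {w | ∃ (x y : F) (n : ℤ), -1 ≤ n ∧ w = A.genqc x y n} ∪
  {w | ∃ (x y z : F) (m n : ℤ), -1 ≤ m ∧ -1 ≤ n ∧ w = A.genqa x y z m n} ∪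
  {w | ∃ (x y : F) (n : ℤ), w = A.gene x y n}

/-- The vertex algebra ideal `I` associated to the locality function `N : F × F → ℕ`:
the ideal generated by the base generators together with the locality elements
`xₙy` for all `x, y ∈ F` and `n ≥ N(x,y)`. -/
def vertexIdeal (N : F → F → ℕ) : Submodule k F :=
  A.idealGenBy
    (A.baseGens ∪ {w | ∃ (x y : F) (n : ℤ), (N x y : ℤ) ≤ n ∧ w = A.circ n x y})

end IFA
/-!
Concrete construction of the (completed) infinite free algebra `F(v)` generated by a
unital vector space `v`: product shapes are binary trees with integer-labelled internal
nodes; the span of the monomials of a fixed shape is the corresponding iterated tensor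
power of `v`; and the completion (allowing formal infinite sums of monomials of pairwise
distinct product shapes) is the direct product over all shapes.  Each shape component
carries the discrete topology and `F(v)` the product topology, so that a family is
summable exactly when every shape component receives only finitely many contributions.
-/

/-- Product shapes: full binary rooted trees with an integer at each internal node. -/
inductive Shape : Type
  | leaf : Shape
  | node : ℤ → Shape → Shape → Shape
  deriving DecidableEq

/-- A bundled `k`-vector space. -/
structure MC (k : Type) [Field k] where
  T : Type
  [grp : AddCommGroup T]
  [mod : Module k T]

attribute [instance] MC.grp MC.mod

variable (k : Type) [Field k] [CharZero k] (V : Type) [AddCommGroup V] [Module k V]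

/-- The space spanned by the monomials of a given product shape (bundled). -/
def monData : Shape → MC k
  | .leaf => MC.mk V
  | .node _ l r => MC.mk (TensorProduct k (monData l).T (monData r).T)

/-- The space spanned by the monomials of a given product shape. -/
abbrev MonSp (s : Shape) : Type := (monData k V s).T

instance (s : Shape) : TopologicalSpace (MonSp k V s) := ⊥

/-- The completed infinite free algebra `F(v)` on the (unital) vector space `v = V`. -/
abbrev FV : Type := ∀ s : Shape, MonSp k V s

/-- The embedding of the generating space `v` into `F(v)` (the length-1 component). -/
def ι (a : V) : FV k V := fun s =>
  match s with
  | .leaf => a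
  | .node _ _ _ => 0

/-- The product `x ∘ₙ y` on `F(v)`. -/
def op (n : ℤ) (x y : FV k V) : FV k V := fun s =>
  match s with
  | .leaf => 0
  | .node m l r => if n = m then TensorProduct.tmul k (x l) (y r) else 0

/-- `F(v)` as an infinite free algebra, with distinguished vector the image of the
distinguished vector `e ∈ v`. -/
def freeIFA (e : V) : IFA k (FV k V) where
  one := ι k V e
  circ := op k V
  circ_add_left := by
    intro n x x' y; funext s
    cases s with
    | leaf => simp [op]
    | node m l r =>
        by_cases h : n = m <;>
          (simp [op, h, Pi.add_apply, TensorProduct.add_tmul]; try rfl)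
  circ_add_right := by
    intro n x y y'; funext s
    cases s with
    | leaf => simp [op]
    | node m l r =>
        by_cases h : n = m <;>
          (simp [op, h, Pi.add_apply, TensorProduct.tmul_add]; try rfl)
  circ_smul_left := by
    intro n c x y; funext s
    cases s with
    | leaf => simp [op]
    | node m l r =>
        by_cases h : n = m
        · simp only [op, h, Pi.smul_apply]
          exact (TensorProduct.smul_tmul' c (x l) (y r)).symm
        · simp [op, h]
  circ_smul_right := by
    intro n c x y; funext s
    cases s with
    | leaf => simp [op]
    | node m l r =>
        by_cases h : n = m <;>
          (simp [op, h, Pi.smul_apply, TensorProduct.tmul_smul]; try rfl)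

/-- The vertex algebra ideal `I(v)` of `F(v)`: generated by the base generators
together with the locality elements `uₙv` for `u, v ∈ v` (the generating space) and
`n ≥ N(u,v)`. -/
def genVertexIdeal (e : V) (N : V → V → ℕ) : Submodule k (FV k V) :=
  (freeIFA k V e).idealGenBy
    ((freeIFA k V e).baseGens ∪
      {w | ∃ (a b : V) (n : ℤ), (N a b : ℤ) ≤ n ∧ w = op k V n (ι k V a) (ι k V b)})
/-- The shape-component of the map `F(v) → F(v′)` induced by a linear map `φ : v → v′`
(functoriality of tensor powers). -/
def monMap {k : Type} [Field k] [CharZero k]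
    {V W : Type} [AddCommGroup V] [Module k V] [AddCommGroup W] [Module k W]
    (φ : V →ₗ[k] W) : ∀ s : Shape, MonSp k V s →ₗ[k] MonSp k W s
  | .leaf => φ
  | .node _ l r => TensorProduct.map (monMap φ l) (monMap φ r)

/-- The map `Φ : F(v) → F(v′)` induced by a linear map `φ : v → v′`; it is determined
by `Φ(u) = φ(u)` for `u ∈ v` and `Φ(xₙy) = Φ(x)ₙΦ(y)`. -/
def FVmap {k : Type} [Field k] [CharZero k]
    {V W : Type} [AddCommGroup V] [Module k V] [AddCommGroup W] [Module k W]
    (φ : V →ₗ[k] W) (x : FV k V) : FV k W := fun s => monMap φ s (x s)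

section Aux

variable {k : Type} [Field k] [CharZero k]
variable {V W U : Type} [AddCommGroup V] [Module k V] [AddCommGroup W] [Module k W]
  [AddCommGroup U] [Module k U]

instance (s : Shape) : DiscreteTopology (MonSp k V s) := ⟨rfl⟩

lemma FVmap_add (φ : V →ₗ[k] W) (x y : FV k V) :
    FVmap φ (x + y) = FVmap φ x + FVmap φ y :=
  funext fun s => by simp [FVmap]

lemma FVmap_smul (φ : V →ₗ[k] W) (c : k) (x : FV k V) :
    FVmap φ (c • x) = c • FVmap φ x :=
  funext fun s => by simp [FVmap]

lemma FVmap_sub (φ : V →ₗ[k] W) (x y : FV k V) :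
    FVmap φ (x - y) = FVmap φ x - FVmap φ y :=
  funext fun s => by simp [FVmap]

/-- `FVmap` as a linear map. -/
def FVmapₗ (φ : V →ₗ[k] W) : FV k V →ₗ[k] FV k W where
  toFun := FVmap φ
  map_add' := FVmap_add φ
  map_smul' := FVmap_smul φ

@[simp] lemma FVmapₗ_apply (φ : V →ₗ[k] W) (x : FV k V) : FVmapₗ φ x = FVmap φ x := rfl

lemma FVmap_zero (φ : V →ₗ[k] W) : FVmap φ (0 : FV k V) = 0 :=
  funext fun s => by simp [FVmap]

lemma FVmap_ι (φ : V →ₗ[k] W) (a : V) : FVmap φ (ι k V a) = ι k W (φ a) := by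
  funext s
  cases s with
  | leaf => rfl
  | node m l r => exact map_zero _

lemma FVmap_op (φ : V →ₗ[k] W) (n : ℤ) (x y : FV k V) :
    FVmap φ (op k V n x y) = op k W n (FVmap φ x) (FVmap φ y) := by
  funext s
  cases s with
  | leaf => simp [FVmap, op, monMap]; exact map_zero _
  | node m l r =>
      by_cases h : n = m
      · simp only [FVmap, op, monMap, h, if_true]
        exact TensorProduct.map_tmul _ _ _ _
      · simp [FVmap, op, monMap, h]; exact map_zero _

lemma freeIFA_circ (e : V) : (freeIFA k V e).circ = op k V := rfl
lemma freeIFA_one (e : V) : (freeIFA k V e).one = ι k V e := rfl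
lemma freeIFA_D (e : V) (x : FV k V) :
    (freeIFA k V e).D x = op k V (-2) x (ι k V e) := rfl

lemma FVmap_D (φ : V →ₗ[k] W) (e : V) (e' : W) (hφe : φ e = e') (x : FV k V) :
    FVmap φ ((freeIFA k V e).D x) = (freeIFA k W e').D (FVmap φ x) := by
  rw [freeIFA_D, freeIFA_D, FVmap_op, FVmap_ι, hφe]

lemma FVmap_Diter (φ : V →ₗ[k] W) (e : V) (e' : W) (hφe : φ e = e') (K : ℕ) (x : FV k V) :
    FVmap φ (((freeIFA k V e).D)^[K] x) = (((freeIFA k W e').D)^[K]) (FVmap φ x) := by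
  induction K with
  | zero => rfl
  | succ K ih =>
      rw [Function.iterate_succ_apply', Function.iterate_succ_apply',
        FVmap_D φ e e' hφe, ih]

/-- height of a shape -/
def ht : Shape → ℕ
  | .leaf => 0
  | .node _ l r => max (ht l) (ht r) + 1

lemma D_iter_support (e : V) :
    ∀ (K : ℕ) (w : FV k V), w Shape.leaf = 0 → ∀ s : Shape, ht s ≤ K →
      (((freeIFA k V e).D)^[K]) w s = 0 := by
  intro K
  induction K with
  | zero =>
      intro w hw s hs
      cases s with
      | leaf => exact hw
      | node m l r => simp [ht] at hs
  | succ K ih =>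
      intro w hw s hs
      rw [Function.iterate_succ_apply']
      cases s with
      | leaf => simp [freeIFA_D, op]
      | node m l r =>
          have hl : (((freeIFA k V e).D)^[K]) w l = 0 := by
            refine ih w hw l ?_
            simp [ht] at hs; omega
          by_cases h : (-2 : ℤ) = m
          · simp [freeIFA_D, op, h, hl]; rfl
          · simp [freeIFA_D, op, h, hl]

lemma finsupp_of_hasSum {M : Type} [AddCommGroup M] [TopologicalSpace M]
    [DiscreteTopology M] {f : ℕ → M} {a : M} (h : HasSum f a) :
    ∃ T : Finset ℕ, ∀ i ∉ T, f i = 0 := by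
  have h' : ∀ᶠ F in Filter.atTop, ∑ i ∈ F, f i = a := by
    have := h
    rw [HasSum, nhds_discrete, Filter.tendsto_pure] at this
    exact this
  obtain ⟨T, hT⟩ := Filter.eventually_atTop.mp h'
  refine ⟨T, fun i hi => ?_⟩
  have h1 := hT T le_rfl
  have h2 := hT (insert i T) (Finset.subset_insert i T)
  rw [Finset.sum_insert hi, h1] at h2
  simpa using h2

lemma summable_component_support {f : ℕ → FV k V} (hf : Summable f) (s : Shape) :
    ∃ T : Finset ℕ, ∀ i ∉ T, f i s = 0 := by
  obtain ⟨a, ha⟩ := hf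
  exact finsupp_of_hasSum ((Pi.hasSum.mp ha) s)

lemma FVmap_tsum (φ : V →ₗ[k] W) {f : ℕ → FV k V} (T : Shape → Finset ℕ)
    (hT : ∀ s, ∀ i ∉ T s, f i s = 0) :
    Summable f ∧ Summable (fun i => FVmap φ (f i)) ∧
      FVmap φ (∑' i, f i) = ∑' i, FVmap φ (f i) := by
  have h1 : HasSum f (fun s => ∑ i ∈ T s, f i s) :=
    Pi.hasSum.mpr fun s => hasSum_sum_of_ne_finset_zero (hT s)
  have hT' : ∀ s, ∀ i ∉ T s, FVmap φ (f i) s = 0 := fun s i hi => by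
    simp [FVmap, hT s i hi]
  have h2 : HasSum (fun i => FVmap φ (f i)) (fun s => ∑ i ∈ T s, FVmap φ (f i) s) :=
    Pi.hasSum.mpr fun s => hasSum_sum_of_ne_finset_zero (hT' s)
  refine ⟨⟨_, h1⟩, ⟨_, h2⟩, ?_⟩
  rw [h1.tsum_eq, h2.tsum_eq]
  funext s
  simp [FVmap]

lemma qc_support (e : V) (x y : FV k V) (n : ℤ) :
    ∀ s : Shape, ∀ K ∉ Finset.range (ht s + 1),
      ((((-1 : k) ^ (n + (K : ℤ))) * ((K.factorial : k)⁻¹)) •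
        (((freeIFA k V e).D)^[K]) ((freeIFA k V e).circ (n + (K : ℤ)) y x)) s = 0 := by
  intro s K hK
  have hK' : ht s ≤ K := by
    simp [Finset.mem_range] at hK; omega
  have h0 : ((freeIFA k V e).circ (n + (K : ℤ)) y x) Shape.leaf = 0 := rfl
  have := D_iter_support e K _ h0 s hK'
  simp [this]

lemma qa_support (e : V) (x y z : FV k V) (m n : ℤ) :
    ∀ s : Shape, ∀ K ∉ (match s with
        | .leaf => (∅ : Finset ℕ)
        | .node p _ _ => {(m - p).toNat, (m + n - p).toNat}),
      (((IFA.zbinom k m K) * ((-1 : k) ^ K)) •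
        ((freeIFA k V e).circ (m - (K : ℤ)) x ((freeIFA k V e).circ (n + (K : ℤ)) y z)
          - ((-1 : k) ^ m) • (freeIFA k V e).circ (m + n - (K : ℤ)) y
              ((freeIFA k V e).circ (K : ℤ) x z))) s = 0 := by
  intro s K hK
  cases s with
  | leaf => simp [freeIFA_circ, op]
  | node p l r =>
      simp only [Finset.mem_insert, Finset.mem_singleton] at hK
      push_neg at hK
      have h1 : m - (K : ℤ) ≠ p := by omega
      have h2 : m + n - (K : ℤ) ≠ p := by omega
      simp [freeIFA_circ, op, h1, h2]

lemma FVmap_one (φ : V →ₗ[k] W) (e : V) (e' : W) (hφe : φ e = e') :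
    FVmap φ ((freeIFA k V e).one) = (freeIFA k W e').one := by
  rw [freeIFA_one, freeIFA_one, FVmap_ι, hφe]

lemma FVmap_geni (φ : V →ₗ[k] W) (e : V) (e' : W) (hφe : φ e = e') (x : FV k V) (n : ℤ) :
    FVmap φ ((freeIFA k V e).geni x n) = (freeIFA k W e').geni (FVmap φ x) n := by
  unfold IFA.geni
  rw [FVmap_sub, freeIFA_circ, freeIFA_circ, freeIFA_one, freeIFA_one, FVmap_op,
    FVmap_ι, hφe]
  by_cases h : n = -1 <;> simp [h, FVmap_zero]

lemma FVmap_gend (φ : V →ₗ[k] W) (e : V) (e' : W) (hφe : φ e = e') (x y : FV k V) (n : ℤ) :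
    FVmap φ ((freeIFA k V e).gend x y n) = (freeIFA k W e').gend (FVmap φ x) (FVmap φ y) n := by
  unfold IFA.gend
  rw [FVmap_sub, FVmap_sub, FVmap_D φ e e' hφe, freeIFA_circ, freeIFA_circ,
    FVmap_op, FVmap_op, FVmap_op, FVmap_D φ e e' hφe, FVmap_D φ e e' hφe]

lemma FVmap_gene (φ : V →ₗ[k] W) (e : V) (e' : W) (hφe : φ e = e') (x y : FV k V) (n : ℤ) :
    FVmap φ ((freeIFA k V e).gene x y n) = (freeIFA k W e').gene (FVmap φ x) (FVmap φ y) n := by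
  unfold IFA.gene
  rw [FVmap_add, FVmap_smul, freeIFA_circ, freeIFA_circ, FVmap_op, FVmap_op,
    FVmap_D φ e e' hφe]

lemma FVmap_genqc (φ : V →ₗ[k] W) (e : V) (e' : W) (hφe : φ e = e') (x y : FV k V) (n : ℤ) :
    FVmap φ ((freeIFA k V e).genqc x y n) = (freeIFA k W e').genqc (FVmap φ x) (FVmap φ y) n := by
  unfold IFA.genqc
  obtain ⟨_, _, htsum⟩ := FVmap_tsum φ (fun s => Finset.range (ht s + 1)) (qc_support e x y n)
  rw [FVmap_add, htsum]
  simp only [FVmap_smul, FVmap_Diter φ e e' hφe, freeIFA_circ, FVmap_op]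

lemma FVmap_genqa (φ : V →ₗ[k] W) (e : V) (e' : W) (hφe : φ e = e')
    (x y z : FV k V) (m n : ℤ) :
    FVmap φ ((freeIFA k V e).genqa x y z m n)
      = (freeIFA k W e').genqa (FVmap φ x) (FVmap φ y) (FVmap φ z) m n := by
  unfold IFA.genqa
  obtain ⟨_, _, htsum⟩ := FVmap_tsum φ _ (qa_support e x y z m n)
  rw [FVmap_sub, htsum]
  simp only [FVmap_smul, FVmap_sub, freeIFA_circ, FVmap_op]

lemma mem_idealGenBy_of_mem {F : Type} [AddCommGroup F] [Module k F] [TopologicalSpace F]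
    (A : IFA k F) {S : Set F} {x : F} (hx : x ∈ S) : x ∈ A.idealGenBy S := by
  rw [IFA.idealGenBy, Submodule.mem_sInf]
  exact fun J hJ => hJ.2 hx

lemma isIdeal_idealGenBy {F : Type} [AddCommGroup F] [Module k F] [TopologicalSpace F]
    (A : IFA k F) (S : Set F) : A.IsIdeal (A.idealGenBy S) := by
  constructor
  · intro n x y hy
    rw [IFA.idealGenBy, Submodule.mem_sInf] at hy
    constructor <;>
      · rw [IFA.idealGenBy, Submodule.mem_sInf]
        intro J hJ
        first
          | exact (hJ.1.1 n x y (hy J hJ)).1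
          | exact (hJ.1.1 n x y (hy J hJ)).2
  · intro f hf hs
    rw [IFA.idealGenBy, Submodule.mem_sInf]
    intro J hJ
    refine hJ.1.2 f (fun i => ?_) hs
    have := hf i
    rw [IFA.idealGenBy, Submodule.mem_sInf] at this
    exact this J hJ

lemma monMap_id : ∀ s : Shape, monMap (LinearMap.id (R := k) (M := V)) s = LinearMap.id := by
  intro s
  induction s with
  | leaf => rfl
  | node m l r ihl ihr => show TensorProduct.map _ _ = _; rw [ihl, ihr, TensorProduct.map_id]; rfl

lemma monMap_comp (φ : V →ₗ[k] W) (ψ : U →ₗ[k] V) :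
    ∀ s : Shape, monMap (φ.comp ψ) s = (monMap φ s).comp (monMap ψ s) := by
  intro s
  induction s with
  | leaf => rfl
  | node m l r ihl ihr =>
      show TensorProduct.map (monMap (φ ∘ₗ ψ) l) (monMap (φ ∘ₗ ψ) r)
          = (TensorProduct.map (monMap φ l) (monMap φ r)).comp
              (TensorProduct.map (monMap ψ l) (monMap ψ r))
      rw [ihl, ihr]
      exact TensorProduct.map_comp _ _ _ _

end Aux

/-- **functoriality.** Fix a constant `N₀` and set
`V(v) := F(v)/I(v)` with constant locality function `N ≡ N₀`.  For a morphism
`φ : v → v′` of unital vector spaces (`φ(1) = 1`), the induced map `Φ = FVmap φ`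
satisfies `Φ(u) = φ(u)` on `v` and `Φ(xₙy) = Φ(x)ₙΦ(y)`; it maps `I(v)` into `I(v′)`
and hence descends to a vertex algebra morphism `V(φ) : V(v) → V(v′)` sending `1` to
`1` and commuting with all products; moreover `V(id) = id` and `V(φ ∘ ψ) = V(φ) ∘ V(ψ)`
(already at the level of the induced maps). -/
theorem statement15 (k : Type) [Field k] [CharZero k] (N₀ : ℕ)
    (V : Type) [AddCommGroup V] [Module k V] (e : V) (he : e ≠ 0)
    (V' : Type) [AddCommGroup V'] [Module k V'] (e' : V') (he' : e' ≠ 0)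
    (V'' : Type) [AddCommGroup V''] [Module k V''] (e'' : V'') (he'' : e'' ≠ 0)
    (φ : V →ₗ[k] V') (hφ : φ e = e')
    (ψ : V'' →ₗ[k] V) (hψ : ψ e'' = e) :
    (∀ a : V, FVmap φ (ι k V a) = ι k V' (φ a)) ∧
    (FVmap φ (ι k V e) = ι k V' e') ∧
    (∀ (n : ℤ) (x y : FV k V),
      FVmap φ (op k V n x y) = op k V' n (FVmap φ x) (FVmap φ y)) ∧
    (∀ x ∈ genVertexIdeal k V e (fun _ _ => N₀),
      FVmap φ x ∈ genVertexIdeal k V' e' (fun _ _ => N₀)) ∧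
    (∃ Φbar : (FV k V ⧸ genVertexIdeal k V e (fun _ _ => N₀)) →ₗ[k]
        (FV k V' ⧸ genVertexIdeal k V' e' (fun _ _ => N₀)),
      ∀ x : FV k V,
        Φbar (Submodule.Quotient.mk x) = Submodule.Quotient.mk (FVmap φ x)) ∧
    (∀ x : FV k V, FVmap (LinearMap.id (R := k) (M := V)) x = x) ∧
    (∀ x : FV k V'', FVmap (φ.comp ψ) x = FVmap φ (FVmap ψ x)) := by
  
  classical
  -- the ideal of the target
  have hI'ideal : (freeIFA k V' e').IsIdeal (genVertexIdeal k V' e' (fun _ _ => N₀)) :=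
    isIdeal_idealGenBy _ _
  -- generators are mapped to generators
  have hgens : ∀ w ∈ ((freeIFA k V e).baseGens ∪
      {w | ∃ (a b : V) (n : ℤ), ((N₀ : ℕ) : ℤ) ≤ n ∧ w = op k V n (ι k V a) (ι k V b)}),
      FVmap φ w ∈ genVertexIdeal k V' e' (fun _ _ => N₀) := by
    intro w hw
    refine mem_idealGenBy_of_mem _ ?_
    rcases hw with hw | hw
    · left
      rcases hw with (((hw | hw) | hw) | hw) | hw
      · obtain ⟨x, n, hn, rfl⟩ := hw
        exact Or.inl (Or.inl (Or.inl (Or.inl ⟨FVmap φ x, n, hn, FVmap_geni φ e e' hφ x n⟩)))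
      · obtain ⟨x, y, n, hn, rfl⟩ := hw
        exact Or.inl (Or.inl (Or.inl (Or.inr
          ⟨FVmap φ x, FVmap φ y, n, hn, FVmap_gend φ e e' hφ x y n⟩)))
      · obtain ⟨x, y, n, hn, rfl⟩ := hw
        exact Or.inl (Or.inl (Or.inr ⟨FVmap φ x, FVmap φ y, n, hn, FVmap_genqc φ e e' hφ x y n⟩))
      · obtain ⟨x, y, z, m, n, hm, hn, rfl⟩ := hw
        exact Or.inl (Or.inr ⟨FVmap φ x, FVmap φ y, FVmap φ z, m, n, hm, hn,
          FVmap_genqa φ e e' hφ x y z m n⟩)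
      · obtain ⟨x, y, n, rfl⟩ := hw
        exact Or.inr ⟨FVmap φ x, FVmap φ y, n, FVmap_gene φ e e' hφ x y n⟩
    · right
      obtain ⟨a, b, n, hn, rfl⟩ := hw
      exact ⟨φ a, φ b, n, hn, by rw [FVmap_op, FVmap_ι, FVmap_ι]⟩
  -- the ideal containment
  have hle : genVertexIdeal k V e (fun _ _ => N₀) ≤
      Submodule.comap (FVmapₗ φ) (genVertexIdeal k V' e' (fun _ _ => N₀)) := by
    rw [genVertexIdeal, IFA.idealGenBy]
    apply sInf_le
    refine ⟨⟨?_, ?_⟩, ?_⟩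
    · intro n a b hb
      have hb' : FVmap φ b ∈ genVertexIdeal k V' e' (fun _ _ => N₀) := Submodule.mem_comap.mp hb
      constructor
      · rw [Submodule.mem_comap]
        show FVmap φ ((freeIFA k V e).circ n a b) ∈ _
        rw [freeIFA_circ, FVmap_op]
        exact (hI'ideal.1 n (FVmap φ a) (FVmap φ b) hb').1
      · rw [Submodule.mem_comap]
        show FVmap φ ((freeIFA k V e).circ n b a) ∈ _
        rw [freeIFA_circ, FVmap_op]
        exact (hI'ideal.1 n (FVmap φ a) (FVmap φ b) hb').2
    · intro f hf hs
      choose T hT using fun s => summable_component_support hs s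
      obtain ⟨_, hs2, heq⟩ := FVmap_tsum φ T hT
      rw [Submodule.mem_comap]
      show FVmap φ (∑' i, f i) ∈ _
      rw [heq]
      exact hI'ideal.2 _ (fun i => Submodule.mem_comap.mp (hf i)) hs2
    · intro w hw
      exact hgens w hw
  refine ⟨FVmap_ι φ, by rw [FVmap_ι, hφ], FVmap_op φ, fun x hx => hle hx,
    ⟨Submodule.mapQ _ _ (FVmapₗ φ) hle, fun x => by rw [Submodule.mapQ_apply]; rfl⟩,
    fun x => funext fun s => by simp [FVmap, monMap_id],
    fun x => funext fun s => by simp [FVmap, monMap_comp φ ψ]⟩
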